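/- A thermal channel does not increase free energy: if Ω(ρ) = Tr_A[V (ρ⊗τ_A) V†] where τ_A is a Gibbs state of an ancilla with Hamiltonian H_A at inverse temperature β, and V is a unitary commuting with H⊗𝟙 + 𝟙⊗H_A, then F(Ω(ρ)) ≤ F(ρ) for every density matrix ρ, where F(σ) = Tr(σH) − (1/β) S(σ). -/

import Mathlib

open Matrix BigOperators Kronecker Filter
open scoped ComplexOrder
noncomputable section

/-- A density matrix: positive semidefinite with unit trace. -/
def IsDensityMatrix {n : Type*} [Fintype n] (ρ : Matrix n n ℂ) : Prop :=
  ρ.PosSemidef ∧ ρ.trace = 1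

/-- Von Neumann entropy, defined through the eigenvalues of a Hermitian matrix. -/
def vnEntropy {n : Type*} [Fintype n] [DecidableEq n] (ρ : Matrix n n ℂ) : ℝ :=
  if h : ρ.IsHermitian then -∑ i, (h.eigenvalues i) * Real.log (h.eigenvalues i) else 0

/-- Functional calculus: logarithm of a Hermitian matrix (0 otherwise). -/
def hermLog {n : Type*} [Fintype n] [DecidableEq n] (A : Matrix n n ℂ) : Matrix n n ℂ :=
  if h : A.IsHermitian then
    (h.eigenvectorUnitary : Matrix n n ℂ) *
      Matrix.diagonal (fun i => (Real.log (h.eigenvalues i) : ℂ)) *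
      (star (h.eigenvectorUnitary : Matrix n n ℂ))
  else 0

/-- Functional calculus: exponential of a Hermitian matrix (0 otherwise). -/
def hermExp {n : Type*} [Fintype n] [DecidableEq n] (A : Matrix n n ℂ) : Matrix n n ℂ :=
  if h : A.IsHermitian then
    (h.eigenvectorUnitary : Matrix n n ℂ) *
      Matrix.diagonal (fun i => (Real.exp (h.eigenvalues i) : ℂ)) *
      (star (h.eigenvectorUnitary : Matrix n n ℂ))
  else 0

/-- Quantum relative entropy D(ρ‖σ) = Tr(ρ log ρ) - Tr(ρ log σ). -/
def relEntropy {n : Type*} [Fintype n] [DecidableEq n] (ρ σ : Matrix n n ℂ) : ℝ :=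
  ((ρ * hermLog ρ).trace - (ρ * hermLog σ).trace).re

/-- Gibbs (thermal) state at inverse temperature β. -/
def gibbs {n : Type*} [Fintype n] [DecidableEq n] (β : ℝ) (Hm : Matrix n n ℂ) : Matrix n n ℂ :=
  (hermExp ((-β : ℂ) • Hm)).trace⁻¹ • hermExp ((-β : ℂ) • Hm)

/-- Choi matrix of a map on matrices. -/
def choiMatrix {n m : Type*} [Fintype n] [DecidableEq n] [Fintype m]
    (Φ : Matrix n n ℂ → Matrix m m ℂ) : Matrix (n × m) (n × m) ℂ :=
  fun p q => Φ (Matrix.single p.1 q.1 1) p.2 q.2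

/-- A quantum channel: linear, completely positive (PSD Choi matrix), trace preserving. -/
def IsCPTP {n m : Type*} [Fintype n] [DecidableEq n] [Fintype m]
    (Φ : Matrix n n ℂ → Matrix m m ℂ) : Prop :=
  (∀ (a : ℂ) (A B : Matrix n n ℂ), Φ (a • A + B) = a • Φ A + Φ B) ∧
  (choiMatrix Φ).PosSemidef ∧ (∀ A : Matrix n n ℂ, (Φ A).trace = A.trace)

/-- Tensor product of two channels, acting on bipartite matrices. -/
def tensorChan {n m : Type*} [Fintype n] [DecidableEq n] [Fintype m] [DecidableEq m]
    (Φ₁ : Matrix n n ℂ → Matrix n n ℂ) (Φ₂ : Matrix m m ℂ → Matrix m m ℂ)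
    (A : Matrix (n × m) (n × m) ℂ) : Matrix (n × m) (n × m) ℂ :=
  fun p q => ∑ a, ∑ b, ∑ c, ∑ d, A (a, c) (b, d) *
    (Φ₁ (Matrix.single a b 1)) p.1 q.1 * (Φ₂ (Matrix.single c d 1)) p.2 q.2

/-- Partial trace over the second factor. -/
def ptrace₂ {n m : Type*} [Fintype m] (ρ : Matrix (n × m) (n × m) ℂ) : Matrix n n ℂ :=
  fun i j => ∑ k, ρ (i, k) (j, k)

/-- Partial trace over the first factor. -/
def ptrace₁ {n m : Type*} [Fintype n] (ρ : Matrix (n × m) (n × m) ℂ) : Matrix m m ℂ :=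
  fun k l => ∑ i, ρ (i, k) (i, l)

/-- Free energy F(ρ) = Tr(ρH) - kT S(ρ). -/
def freeEnergy {n : Type*} [Fintype n] [DecidableEq n]
    (ρ Hm : Matrix n n ℂ) (kT : ℝ) : ℝ :=
  ((ρ * Hm).trace).re - kT * vnEntropy ρ

/-- Free energy difference ΔF(ρ, Ω) = F(Ω(ρ)) - F(ρ). -/
def deltaF {n : Type*} [Fintype n] [DecidableEq n]
    (Φ : Matrix n n ℂ → Matrix n n ℂ) (ρ Hm : Matrix n n ℂ) (kT : ℝ) : ℝ :=
  freeEnergy (Φ ρ) Hm kT - freeEnergy ρ Hm kT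

/-- Distillable work W(Ω,H) = sup over density matrices ρ of ΔF(ρ, Ω). -/
def distillableWork {n : Type*} [Fintype n] [DecidableEq n]
    (Φ : Matrix n n ℂ → Matrix n n ℂ) (Hm : Matrix n n ℂ) (kT : ℝ) : ℝ :=
  sSup { w | ∃ ρ, IsDensityMatrix ρ ∧ w = deltaF Φ ρ Hm kT }

/-- Marginal of a multipartite state at site `i`. -/
def marginal {ι : Type*} [Fintype ι] [DecidableEq ι] {H : ι → Type*}
    [∀ i, Fintype (H i)] [∀ i, DecidableEq (H i)]
    (σ : Matrix (∀ j, H j) (∀ j, H j) ℂ) (i : ι) : Matrix (H i) (H i) ℂ :=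
  fun a b => ∑ f : ∀ j, H j, if f i = a then σ f (Function.update f i b) else 0

/-- Tensor product of a family of channels, acting on a multipartite matrix. -/
def tensorChanPi {ι : Type*} [Fintype ι] [DecidableEq ι] {H : ι → Type*}
    [∀ i, Fintype (H i)] [∀ i, DecidableEq (H i)]
    (Φ : ∀ i, Matrix (H i) (H i) ℂ → Matrix (H i) (H i) ℂ)
    (σ : Matrix (∀ j, H j) (∀ j, H j) ℂ) : Matrix (∀ j, H j) (∀ j, H j) ℂ :=
  fun f g => ∑ F : ∀ j, H j, ∑ G : ∀ j, H j,
    σ F G * ∏ j, (Φ j (Matrix.single (F j) (G j) 1)) (f j) (g j)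

/-- Embedding of a single-site operator into a multipartite system. -/
def embedAt {ι : Type*} [Fintype ι] [DecidableEq ι] {H : ι → Type*}
    [∀ i, Fintype (H i)] [∀ i, DecidableEq (H i)]
    (i : ι) (A : Matrix (H i) (H i) ℂ) : Matrix (∀ j, H j) (∀ j, H j) ℂ :=
  fun f g => A (f i) (g i) * ∏ j ∈ Finset.univ.erase i, (if f j = g j then 1 else 0)

/-- Binary entropy. -/
def binEntropy (p : ℝ) : ℝ := -p * Real.log p - (1 - p) * Real.log (1 - p)

section Helpers

open Polynomial

set_option linter.unusedSectionVars false in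
lemma sum_comm3' {α β γ M : Type*} [Fintype α] [Fintype β] [Fintype γ] [AddCommMonoid M]
    (f : α → β → γ → M) :
    ∑ i : α, ∑ j : β, ∑ k : γ, f i j k = ∑ k : γ, ∑ i : α, ∑ j : β, f i j k :=
  calc ∑ i : α, ∑ j : β, ∑ k : γ, f i j k
      = ∑ i : α, ∑ k : γ, ∑ j : β, f i j k := Finset.sum_congr rfl fun i _ => Finset.sum_comm
    _ = ∑ k : γ, ∑ i : α, ∑ j : β, f i j k := Finset.sum_comm

variable {m : Type*} [Fintype m] [DecidableEq m]

lemma umul1 {T : Matrix m m ℂ} (hT : T ∈ Matrix.unitaryGroup m ℂ) : T * Tᴴ = 1 := by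
  have := Matrix.mem_unitaryGroup_iff.mp hT; rwa [Matrix.star_eq_conjTranspose] at this

lemma umul2 {T : Matrix m m ℂ} (hT : T ∈ Matrix.unitaryGroup m ℂ) : Tᴴ * T = 1 := by
  have := Matrix.mem_unitaryGroup_iff'.mp hT; rwa [Matrix.star_eq_conjTranspose] at this

lemma trace_conj_diag {T : Matrix m m ℂ} (hT : T ∈ Matrix.unitaryGroup m ℂ) (d : m → ℂ) :
    (T * Matrix.diagonal d * Tᴴ).trace = ∑ i, d i := by
  rw [Matrix.trace_mul_cycle, umul2 hT, Matrix.one_mul, Matrix.trace_diagonal]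

lemma conj_pair {T : Matrix m m ℂ} (hT : T ∈ Matrix.unitaryGroup m ℂ) (d e : m → ℂ) :
    (T * Matrix.diagonal d * Tᴴ) * (T * Matrix.diagonal e * Tᴴ)
      = T * Matrix.diagonal (fun i => d i * e i) * Tᴴ := by
  have h2 := umul2 hT
  calc (T * Matrix.diagonal d * Tᴴ) * (T * Matrix.diagonal e * Tᴴ)
      = T * (Matrix.diagonal d * ((Tᴴ * T) * (Matrix.diagonal e * Tᴴ))) := by
        simp only [Matrix.mul_assoc]
    _ = T * Matrix.diagonal (fun i => d i * e i) * Tᴴ := by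
        rw [h2, Matrix.one_mul]
        simp only [← Matrix.mul_assoc]
        rw [Matrix.mul_assoc T, Matrix.diagonal_mul_diagonal]

lemma trace_conj_pair {T : Matrix m m ℂ} (hT : T ∈ Matrix.unitaryGroup m ℂ) (d e : m → ℂ) :
    ((T * Matrix.diagonal d * Tᴴ) * (T * Matrix.diagonal e * Tᴴ)).trace = ∑ i, d i * e i := by
  rw [conj_pair hT, trace_conj_diag hT]

lemma spectral' {A : Matrix m m ℂ} (hA : A.IsHermitian) :
    A = (hA.eigenvectorUnitary : Matrix m m ℂ) *
      Matrix.diagonal (fun i => (hA.eigenvalues i : ℂ)) *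
      ((hA.eigenvectorUnitary : Matrix m m ℂ))ᴴ := by
  have h := hA.spectral_theorem
  rw [Unitary.conjStarAlgAut_apply, Matrix.star_eq_conjTranspose] at h
  exact h

lemma decomp_posSemidef {T : Matrix m m ℂ} (hT : T ∈ Matrix.unitaryGroup m ℂ) {d : m → ℝ}
    (hd : ∀ i, 0 ≤ d i) : (T * Matrix.diagonal (fun i => (d i : ℂ)) * Tᴴ).PosSemidef := by
  refine Matrix.PosSemidef.mul_mul_conjTranspose_same ?_ T
  exact Matrix.posSemidef_diagonal_iff.mpr fun i => by
    simpa using Complex.zero_le_real.mpr (hd i)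

lemma trace_decomp {T : Matrix m m ℂ} (hT : T ∈ Matrix.unitaryGroup m ℂ) (d : m → ℝ) :
    (T * Matrix.diagonal (fun i => (d i : ℂ)) * Tᴴ).trace = ((∑ i, d i : ℝ) : ℂ) := by
  rw [trace_conj_diag hT]; push_cast; rfl

/- charpoly machinery -/
lemma charpoly_conj_inv (U W A : Matrix m m ℂ)
    (h1 : U * W = 1) (h2 : W * U = 1) : (U * A * W).charpoly = A.charpoly := by
  have hmap : ∀ B B' : Matrix m m ℂ, (B * B').map (C : ℂ →+* ℂ[X]) = B.map C * B'.map C :=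
    fun B B' => Matrix.map_mul
  have hch : ∀ M : Matrix m m ℂ, charmatrix M =
      Matrix.diagonal (fun _ : m => (X:ℂ[X])) - M.map C := by
    intro M; ext i j; simp [charmatrix_apply, Matrix.sub_apply, Matrix.map_apply]
  have key : charmatrix (U * A * W) = U.map C * charmatrix A * W.map C := by
    have hd : (Matrix.diagonal (fun _ : m => (X : ℂ[X]))) =
        U.map (C : ℂ →+* ℂ[X]) * Matrix.diagonal (fun _ : m => (X : ℂ[X])) * W.map C := by
      rw [← Matrix.smul_one_eq_diagonal, Matrix.mul_smul, Matrix.mul_one, Matrix.smul_mul,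
        ← hmap, h1]
      simp [Matrix.smul_one_eq_diagonal]
    rw [hch, hch, Matrix.mul_sub, Matrix.sub_mul, ← hd, hmap, hmap]
  rw [Matrix.charpoly, Matrix.charpoly, key, Matrix.det_mul, Matrix.det_mul]
  have hdet : (U.map (C : ℂ →+* ℂ[X])).det * (W.map (C:ℂ→+*ℂ[X])).det = 1 := by
    rw [mul_comm, ← Matrix.det_mul, ← hmap, h2]; simp
  calc (U.map (C:ℂ→+*ℂ[X])).det * A.charmatrix.det * (W.map (C:ℂ→+*ℂ[X])).det
      = (U.map (C:ℂ→+*ℂ[X])).det * (W.map (C:ℂ→+*ℂ[X])).det * A.charmatrix.det := by ring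
    _ = A.charmatrix.det := by rw [hdet, one_mul]

lemma charpoly_diag (d : m → ℂ) :
    (Matrix.diagonal d).charpoly = ∏ i, (X - C (d i)) := by
  rw [Matrix.charpoly]
  have : charmatrix (Matrix.diagonal d) = Matrix.diagonal (fun i => (X:ℂ[X]) - C (d i)) := by
    ext i j
    by_cases h : i = j
    · subst h; simp [charmatrix_apply_eq]
    · simp [charmatrix_apply_ne _ _ _ h, Matrix.diagonal_apply_ne _ h]
  rw [this, Matrix.det_diagonal]

lemma charpoly_of_unitary_conj {W : Matrix m m ℂ}
    (hW : W ∈ Matrix.unitaryGroup m ℂ) (d : m → ℂ) :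
    (W * Matrix.diagonal d * Wᴴ).charpoly = ∏ i, (X - C (d i)) := by
  rw [← charpoly_diag d]
  exact charpoly_conj_inv W Wᴴ _ (umul1 hW) (umul2 hW)

lemma eig_multiset {W : Matrix m m ℂ}
    (hW : W ∈ Matrix.unitaryGroup m ℂ) (d : m → ℝ) {A : Matrix m m ℂ} (hA : A.IsHermitian)
    (hdec : A = W * Matrix.diagonal (fun i => (d i : ℂ)) * Wᴴ) :
    (Finset.univ.val.map fun i => ((hA.eigenvalues i : ℂ))) =
      (Finset.univ.val.map fun j => ((d j : ℂ))) := by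
  have hU : (hA.eigenvectorUnitary : Matrix m m ℂ) ∈ Matrix.unitaryGroup m ℂ :=
    hA.eigenvectorUnitary.2
  have h1 : A.charpoly = ∏ i, (X - C ((hA.eigenvalues i : ℂ))) := by
    have h := spectral' hA
    have h2 := charpoly_of_unitary_conj hU (fun i => ((hA.eigenvalues i : ℂ)))
    conv_lhs => rw [h]
    simpa [Function.comp] using h2
  have h2 : A.charpoly = ∏ j, (X - C ((d j : ℂ))) := by
    rw [hdec]; exact charpoly_of_unitary_conj hW _
  have hroots : (∏ i, (X - C ((hA.eigenvalues i : ℂ)))).roots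
      = (∏ j, (X - C ((d j : ℂ)))).roots := by rw [← h1, ← h2]
  have hr : ∀ g : m → ℂ, (∏ i, (X - C (g i))).roots = Finset.univ.val.map g := by
    intro g
    have : (∏ i, (X - C (g i))) = (Finset.univ.val.map fun i => X - C (g i)).prod := by
      rw [Finset.prod]
    rw [this, show (fun i => X - C (g i)) = (fun a => X - C a) ∘ g from rfl,
      ← Multiset.map_map]
    exact roots_multiset_prod_X_sub_C _
  rw [hr, hr] at hroots
  exact hroots

lemma eig_sum_conj {W : Matrix m m ℂ}
    (hW : W ∈ Matrix.unitaryGroup m ℂ) (d : m → ℝ) {A : Matrix m m ℂ} (hA : A.IsHermitian)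
    (hdec : A = W * Matrix.diagonal (fun i => (d i : ℂ)) * Wᴴ) (f : ℝ → ℝ) :
    ∑ i, f (hA.eigenvalues i) = ∑ j, f (d j) := by
  have h := congrArg (fun s => (s.map (fun z : ℂ => f z.re)).sum) (eig_multiset hW d hA hdec)
  simp only [Multiset.map_map, Function.comp] at h
  have e1 : ∀ g : m → ℝ, (Multiset.map (fun i => f ((g i : ℂ)).re) Finset.univ.val).sum
      = ∑ i, f (g i) := by
    intro g
    simp only [Complex.ofReal_re]
    rfl
  rw [e1, e1] at h
  exact h

lemma vnEntropy_of_decomp {W : Matrix m m ℂ}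
    (hW : W ∈ Matrix.unitaryGroup m ℂ) (d : m → ℝ) {A : Matrix m m ℂ} (hA : A.IsHermitian)
    (hdec : A = W * Matrix.diagonal (fun i => (d i : ℂ)) * Wᴴ) :
    vnEntropy A = -∑ j, d j * Real.log (d j) := by
  rw [vnEntropy, dif_pos hA, eig_sum_conj hW d hA hdec (fun x => x * Real.log x)]

end Helpers

section Helpers2

lemma klein_pt (p q : ℝ) (hp : 0 ≤ p) (hq : 0 < q) :
    p - q ≤ p * Real.log p - p * Real.log q := by
  rcases eq_or_lt_of_le hp with h | h
  · simp [← h]; positivity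
  · have h1 : Real.log (q / p) ≤ q / p - 1 := Real.log_le_sub_one_of_pos (by positivity)
    have h2 : Real.log (q / p) = Real.log q - Real.log p := Real.log_div hq.ne' h.ne'
    rw [h2] at h1
    have := mul_le_mul_of_nonneg_left h1 h.le
    have h3 : p * (q / p - 1) = q - p := by field_simp
    nlinarith

/-- Klein's inequality. -/
lemma klein {m : Type*} [Fintype m] [DecidableEq m] {σ : Matrix m m ℂ}
    (hσ : σ.PosSemidef) (htr : σ.trace = 1) {W : Matrix m m ℂ}
    (hW : W ∈ Matrix.unitaryGroup m ℂ) (q : m → ℝ) (hq : ∀ j, 0 < q j)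
    (hsq : ∑ j, q j = 1) :
    (σ * (W * Matrix.diagonal (fun j => (Real.log (q j) : ℂ)) * Wᴴ)).trace.re
      ≤ - vnEntropy σ := by
  have hH : σ.IsHermitian := hσ.1
  set U : Matrix m m ℂ := (hH.eigenvectorUnitary : Matrix m m ℂ) with hUdef
  set p : m → ℝ := hH.eigenvalues with hpdef
  have hp0 : ∀ i, 0 ≤ p i := hσ.eigenvalues_nonneg
  have hspec : σ = U * Matrix.diagonal (fun i => (p i : ℂ)) * Uᴴ := spectral' hH
  have hUmem : U ∈ Matrix.unitaryGroup m ℂ := hH.eigenvectorUnitary.2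
  have hUW : U * Uᴴ = 1 := umul1 hUmem
  have hWU : Uᴴ * U = 1 := umul2 hUmem
  have hW1 : W * Wᴴ = 1 := umul1 hW
  have hW2 : Wᴴ * W = 1 := umul2 hW
  set M : Matrix m m ℂ := Uᴴ * W with hMdef
  have hMU : M * Mᴴ = 1 := by
    calc (Uᴴ * W) * (Uᴴ * W)ᴴ = Uᴴ * (W * Wᴴ) * U := by
          simp [Matrix.conjTranspose_mul, Matrix.mul_assoc]
      _ = 1 := by rw [hW1, Matrix.mul_one, hWU]
  have hUM : Mᴴ * M = 1 := by
    calc (Uᴴ * W)ᴴ * (Uᴴ * W) = Wᴴ * (U * Uᴴ) * W := by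
          simp [Matrix.conjTranspose_mul, Matrix.mul_assoc]
      _ = 1 := by rw [hUW, Matrix.mul_one, hW2]
  set c : m → m → ℝ := fun i j => Complex.normSq (M i j) with hcdef
  have hc0 : ∀ i j, 0 ≤ c i j := fun i j => Complex.normSq_nonneg _
  have hrow : ∀ i, ∑ j, c i j = 1 := by
    intro i
    have h := congrFun (congrFun hMU i) i
    rw [Matrix.mul_apply] at h
    simp only [Matrix.conjTranspose_apply, Matrix.one_apply_eq] at h
    have h2 : ∀ j, M i j * star (M i j) = ((c i j : ℝ) : ℂ) := by
      intro j; rw [hcdef]; exact Complex.mul_conj _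
    rw [Finset.sum_congr rfl (fun j _ => h2 j)] at h
    exact_mod_cast h
  have hcol : ∀ j, ∑ i, c i j = 1 := by
    intro j
    have h := congrFun (congrFun hUM j) j
    rw [Matrix.mul_apply] at h
    simp only [Matrix.conjTranspose_apply, Matrix.one_apply_eq] at h
    have h2 : ∀ i, star (M i j) * M i j = ((c i j : ℝ) : ℂ) := by
      intro i; rw [hcdef, mul_comm]; exact Complex.mul_conj _
    rw [Finset.sum_congr rfl (fun i _ => h2 i)] at h
    exact_mod_cast h
  have hsp : ∑ i, p i = 1 := by
    have h : σ.trace = ((∑ i, p i : ℝ) : ℂ) := by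
      rw [hspec, trace_decomp hUmem]
    rw [htr] at h
    exact_mod_cast h.symm
  set L : Matrix m m ℂ := Matrix.diagonal (fun j => (Real.log (q j) : ℂ)) with hLdef
  have hconj : σ * (W * L * Wᴴ) =
      U * (Matrix.diagonal (fun i => (p i : ℂ)) * (M * L * Mᴴ)) * Uᴴ := by
    rw [hspec, hMdef]
    simp only [Matrix.conjTranspose_mul, Matrix.conjTranspose_conjTranspose]
    calc U * Matrix.diagonal (fun i => (p i : ℂ)) * Uᴴ * (W * L * Wᴴ)
        = U * (Matrix.diagonal (fun i => (p i : ℂ)) * (Uᴴ * W * L * (Wᴴ * (U * Uᴴ)))) := by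
          rw [hUW, Matrix.mul_one]; simp only [Matrix.mul_assoc]
      _ = _ := by simp only [Matrix.mul_assoc]
  have htrace : (σ * (W * L * Wᴴ)).trace
      = ((∑ i, ∑ j, p i * Real.log (q j) * c i j : ℝ) : ℂ) := by
    rw [hconj, Matrix.trace_mul_cycle, ← Matrix.mul_assoc, hWU, Matrix.one_mul]
    rw [Matrix.trace]
    have hdiagmul : ∀ i, (Matrix.diagonal (fun i => (p i : ℂ)) * (M * L * Mᴴ)).diag i
        = (p i : ℂ) * (M * L * Mᴴ) i i := by
      intro i; simp [Matrix.diag, Matrix.diagonal_mul]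
    rw [Finset.sum_congr rfl (fun i _ => hdiagmul i)]
    have hMLM : ∀ i, (M * L * Mᴴ) i i = ∑ j, (Real.log (q j) : ℂ) * ((c i j : ℝ) : ℂ) := by
      intro i
      rw [Matrix.mul_apply]
      refine Finset.sum_congr rfl fun j _ => ?_
      rw [Matrix.mul_diagonal]
      rw [Matrix.conjTranspose_apply]
      rw [hcdef]
      have : M i j * (Real.log (q j) : ℂ) * star (M i j)
          = (Real.log (q j) : ℂ) * (M i j * star (M i j)) := by ring
      rw [this]
      exact congrArg (fun z => (Real.log (q j) : ℂ) * z) (Complex.mul_conj _)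
    rw [Finset.sum_congr rfl (fun i _ => by rw [hMLM i])]
    push_cast
    refine Finset.sum_congr rfl fun i _ => ?_
    rw [Finset.mul_sum]
    refine Finset.sum_congr rfl fun j _ => ?_
    ring
  rw [htrace, Complex.ofReal_re]
  have hvn : vnEntropy σ = -∑ i, p i * Real.log (p i) := by
    rw [vnEntropy, dif_pos hH]
  rw [hvn, neg_neg]
  have key : ∑ i, ∑ j, c i j * (p i - q j) ≤
      ∑ i, ∑ j, c i j * (p i * Real.log (p i) - p i * Real.log (q j)) := by
    refine Finset.sum_le_sum fun i _ => Finset.sum_le_sum fun j _ => ?_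
    exact mul_le_mul_of_nonneg_left (klein_pt (p i) (q j) (hp0 i) (hq j)) (hc0 i j)
  have hlhs : ∑ i, ∑ j, c i j * (p i - q j) = 0 := by
    have h1 : ∀ i, ∑ j, c i j * (p i - q j) = p i - ∑ j, c i j * q j := by
      intro i
      rw [show (fun j => c i j * (p i - q j)) = fun j => c i j * p i - c i j * q j from
        funext fun j => by ring]
      rw [Finset.sum_sub_distrib, ← Finset.sum_mul, hrow i, one_mul]
    rw [Finset.sum_congr rfl (fun i _ => h1 i), Finset.sum_sub_distrib, hsp]
    rw [Finset.sum_comm]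
    have h2 : ∀ j, ∑ i, c i j * q j = q j := by
      intro j; rw [← Finset.sum_mul, hcol j, one_mul]
    rw [Finset.sum_congr rfl (fun j _ => h2 j), hsq, sub_self]
  have hrhs : ∑ i, ∑ j, c i j * (p i * Real.log (p i) - p i * Real.log (q j))
      = ∑ i, p i * Real.log (p i) - ∑ i, ∑ j, p i * Real.log (q j) * c i j := by
    rw [← Finset.sum_sub_distrib]
    refine Finset.sum_congr rfl fun i _ => ?_
    rw [show (fun j => c i j * (p i * Real.log (p i) - p i * Real.log (q j))) =
      fun j => c i j * (p i * Real.log (p i)) - p i * Real.log (q j) * c i j from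
      funext fun j => by ring]
    rw [Finset.sum_sub_distrib, ← Finset.sum_mul, hrow i, one_mul]
  rw [hlhs, hrhs] at key
  linarith

end Helpers2

section Helpers3

set_option linter.unusedSectionVars false

variable {n a : Type*} [Fintype n] [DecidableEq n] [Fintype a] [DecidableEq a]

lemma conjTranspose_kron (A : Matrix n n ℂ) (B : Matrix a a ℂ) :
    (A ⊗ₖ B)ᴴ = Aᴴ ⊗ₖ Bᴴ := by
  ext ⟨i,k⟩ ⟨j,l⟩
  simp only [Matrix.conjTranspose_apply, Matrix.kronecker_apply, star_mul']

lemma kron_unitary {A : Matrix n n ℂ} {B : Matrix a a ℂ}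
    (hA : A ∈ Matrix.unitaryGroup n ℂ) (hB : B ∈ Matrix.unitaryGroup a ℂ) :
    A ⊗ₖ B ∈ Matrix.unitaryGroup (n × a) ℂ := by
  rw [Matrix.mem_unitaryGroup_iff, Matrix.star_eq_conjTranspose, conjTranspose_kron,
    ← Matrix.mul_kronecker_mul, umul1 hA, umul1 hB, Matrix.one_kronecker_one]

lemma trace_mul_ptrace₂ (M : Matrix (n × a) (n × a) ℂ) (X : Matrix n n ℂ) :
    ((ptrace₂ M) * X).trace = (M * (X ⊗ₖ (1 : Matrix a a ℂ))).trace := by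
  calc ((ptrace₂ M) * X).trace
      = ∑ i, ∑ j, (∑ k, M (i,k) (j,k)) * X j i := by
        simp only [Matrix.trace, Matrix.diag, Matrix.mul_apply, ptrace₂]
    _ = ∑ i, ∑ k, ∑ j, M (i,k) (j,k) * X j i := by
        refine Finset.sum_congr rfl fun i _ => ?_
        simp_rw [Finset.sum_mul]
        exact Finset.sum_comm
    _ = (M * (X ⊗ₖ (1 : Matrix a a ℂ))).trace := by
        simp only [Matrix.trace, Matrix.diag, Matrix.mul_apply, Matrix.kronecker_apply,
          Matrix.one_apply, Fintype.sum_prod_type, mul_ite, mul_one, mul_zero,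
          Finset.sum_ite_eq', Finset.mem_univ, if_true]

lemma trace_mul_ptrace₁ (M : Matrix (n × a) (n × a) ℂ) (Y : Matrix a a ℂ) :
    ((ptrace₁ M) * Y).trace = (M * ((1 : Matrix n n ℂ) ⊗ₖ Y)).trace := by
  calc ((ptrace₁ M) * Y).trace
      = ∑ k, ∑ l, (∑ i, M (i,k) (i,l)) * Y l k := by
        simp only [Matrix.trace, Matrix.diag, Matrix.mul_apply, ptrace₁]
    _ = ∑ k, ∑ i, ∑ l, M (i,k) (i,l) * Y l k := by
        refine Finset.sum_congr rfl fun k _ => ?_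
        simp_rw [Finset.sum_mul]
        exact Finset.sum_comm
    _ = ∑ i, ∑ k, ∑ l, M (i,k) (i,l) * Y l k := Finset.sum_comm
    _ = (M * ((1 : Matrix n n ℂ) ⊗ₖ Y)).trace := by
        simp only [Matrix.trace, Matrix.diag, Matrix.mul_apply, Matrix.kronecker_apply,
          Matrix.one_apply, Fintype.sum_prod_type, mul_ite, ite_mul, one_mul, zero_mul,
          mul_zero, mul_one]
        refine Finset.sum_congr rfl fun i _ => Finset.sum_congr rfl fun k _ => ?_
        rw [Finset.sum_comm]
        simp only [Finset.sum_ite_eq', Finset.mem_univ, if_true]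

lemma ptrace₂_trace (M : Matrix (n × a) (n × a) ℂ) : (ptrace₂ M).trace = M.trace := by
  calc (ptrace₂ M).trace = ∑ i, ∑ k, M (i,k) (i,k) := Finset.sum_congr rfl (fun i _ => rfl)
    _ = M.trace := by
        rw [Matrix.trace]
        exact (Fintype.sum_prod_type (f := fun p : n × a => M.diag p)).symm

lemma ptrace₁_trace (M : Matrix (n × a) (n × a) ℂ) : (ptrace₁ M).trace = M.trace := by
  calc (ptrace₁ M).trace = ∑ k, ∑ i, M (i,k) (i,k) := Finset.sum_congr rfl (fun k _ => rfl)
    _ = ∑ i, ∑ k, M (i,k) (i,k) := Finset.sum_comm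
    _ = M.trace := by
        rw [Matrix.trace]
        exact (Fintype.sum_prod_type (f := fun p : n × a => M.diag p)).symm

lemma ptrace₂_posSemidef {M : Matrix (n × a) (n × a) ℂ} (hM : M.PosSemidef) :
    (ptrace₂ M).PosSemidef := by
  rw [Matrix.posSemidef_iff_dotProduct_mulVec]
  constructor
  · ext i j
    simp only [Matrix.conjTranspose_apply, ptrace₂, star_sum]
    refine Finset.sum_congr rfl fun k _ => ?_
    exact congrFun (congrFun hM.1 (i,k)) (j,k)
  · intro x
    have expand : ∀ k : a, dotProduct (star (fun p : n × a => if p.2 = k then x p.1 else 0))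
        (M *ᵥ (fun p : n × a => if p.2 = k then x p.1 else 0))
        = ∑ i, ∑ j, star (x i) * (M (i,k) (j,k) * x j) := by
      intro k
      simp only [dotProduct, Matrix.mulVec, dotProduct, Pi.star_apply, Fintype.sum_prod_type,
        apply_ite star, star_zero, ite_mul, zero_mul, mul_ite, mul_zero,
        Finset.sum_ite_eq', Finset.mem_univ, if_true, Finset.mul_sum]
      refine Finset.sum_congr rfl fun i _ => ?_
      rw [Finset.sum_comm]
      simp only [Finset.sum_ite_eq', Finset.mem_univ, if_true]
    have key : dotProduct (star x) ((ptrace₂ M) *ᵥ x)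
        = ∑ k : a, ∑ i, ∑ j, star (x i) * (M (i,k) (j,k) * x j) := by
      simp only [dotProduct, Matrix.mulVec, dotProduct, Pi.star_apply, ptrace₂,
        Finset.sum_mul, Finset.mul_sum]
      exact sum_comm3' fun i j k => star (x i) * (M (i,k) (j,k) * x j)
    rw [key, Finset.sum_congr rfl (fun k (_ : k ∈ Finset.univ) => (expand k).symm)]
    exact Finset.sum_nonneg fun k _ => hM.dotProduct_mulVec_nonneg _

lemma ptrace₁_posSemidef {M : Matrix (n × a) (n × a) ℂ} (hM : M.PosSemidef) :
    (ptrace₁ M).PosSemidef := by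
  rw [Matrix.posSemidef_iff_dotProduct_mulVec]
  constructor
  · ext k l
    simp only [Matrix.conjTranspose_apply, ptrace₁, star_sum]
    refine Finset.sum_congr rfl fun i _ => ?_
    exact congrFun (congrFun hM.1 (i,k)) (i,l)
  · intro x
    have expand : ∀ i : n, dotProduct (star (fun p : n × a => if p.1 = i then x p.2 else 0))
        (M *ᵥ (fun p : n × a => if p.1 = i then x p.2 else 0))
        = ∑ k, ∑ l, star (x k) * (M (i,k) (i,l) * x l) := by
      intro i
      simp only [dotProduct, Matrix.mulVec, dotProduct, Pi.star_apply, Fintype.sum_prod_type,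
        apply_ite star, star_zero, ite_mul, zero_mul, mul_ite, mul_zero,
        Finset.sum_ite_eq', Finset.mem_univ, if_true, Finset.mul_sum]
      trans ∑ x1 : n, ∑ x2 : a, ∑ x4 : a,
        (if x1 = i then star (x x2) * (M (x1, x2) (i, x4) * x x4) else 0)
      · refine Finset.sum_congr rfl fun x1 _ => Finset.sum_congr rfl fun x2 _ => ?_
        rw [Finset.sum_comm]
        simp only [Finset.sum_ite_eq', Finset.mem_univ, if_true]
      · rw [Finset.sum_comm]
        refine Finset.sum_congr rfl fun x2 _ => ?_
        rw [Finset.sum_comm]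
        simp only [Finset.sum_ite_eq', Finset.mem_univ, if_true]
    have key : dotProduct (star x) ((ptrace₁ M) *ᵥ x)
        = ∑ i : n, ∑ k, ∑ l, star (x k) * (M (i,k) (i,l) * x l) := by
      simp only [dotProduct, Matrix.mulVec, dotProduct, Pi.star_apply, ptrace₁,
        Finset.sum_mul, Finset.mul_sum]
      exact sum_comm3' fun k l i => star (x k) * (M (i,k) (i,l) * x l)
    rw [key, Finset.sum_congr rfl (fun i (_ : i ∈ Finset.univ) => (expand i).symm)]
    exact Finset.sum_nonneg fun i _ => hM.dotProduct_mulVec_nonneg _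

end Helpers3

section Helpers4

variable {a : Type*} [Fintype a] [DecidableEq a]

lemma gibbs_decomp [Nonempty a] (β : ℝ) (HA : Matrix a a ℂ) (hHA : HA.IsHermitian) :
    ∃ (W : Matrix a a ℂ) (q : a → ℝ) (Z : ℝ),
      W ∈ Matrix.unitaryGroup a ℂ ∧ (∀ j, 0 < q j) ∧ (∑ j, q j = 1) ∧ 0 < Z ∧
      gibbs β HA = W * Matrix.diagonal (fun j => (q j : ℂ)) * Wᴴ ∧
      W * Matrix.diagonal (fun j => (Real.log (q j) : ℂ)) * Wᴴ
        = (-β : ℂ) • HA - (Real.log Z : ℂ) • 1 := by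
  have hB : ((-β : ℂ) • HA).IsHermitian := by
    rw [Matrix.IsHermitian, Matrix.conjTranspose_smul, hHA.eq]
    congr 1
    simp [Complex.star_def, ← Complex.ofReal_neg]
  set W : Matrix a a ℂ := (hB.eigenvectorUnitary : Matrix a a ℂ) with hWdef
  have hWmem : W ∈ Matrix.unitaryGroup a ℂ := hB.eigenvectorUnitary.2
  set μ : a → ℝ := hB.eigenvalues with hμdef
  have hBspec : (-β : ℂ) • HA = W * Matrix.diagonal (fun j => (μ j : ℂ)) * Wᴴ := spectral' hB
  have hexp : hermExp ((-β : ℂ) • HA)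
      = W * Matrix.diagonal (fun j => ((Real.exp (μ j) : ℝ) : ℂ)) * Wᴴ := by
    rw [hermExp, dif_pos hB, Matrix.star_eq_conjTranspose]
  set Z : ℝ := ∑ j, Real.exp (μ j) with hZdef
  have hZ : 0 < Z := Finset.sum_pos (fun j _ => Real.exp_pos _) Finset.univ_nonempty
  have htrexp : (hermExp ((-β : ℂ) • HA)).trace = (Z : ℂ) := by
    rw [hexp, trace_decomp hWmem]
  set q : a → ℝ := fun j => Real.exp (μ j) / Z with hqdef
  have hq : ∀ j, 0 < q j := fun j => div_pos (Real.exp_pos _) hZ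
  have hsq : ∑ j, q j = 1 := by
    rw [hqdef, ← Finset.sum_div]
    exact div_self hZ.ne'
  refine ⟨W, q, Z, hWmem, hq, hsq, hZ, ?_, ?_⟩
  · have hfun : (fun j => ((q j : ℝ) : ℂ))
        = ((Z:ℂ))⁻¹ • (fun j => ((Real.exp (μ j) : ℝ) : ℂ)) := by
      funext j
      simp only [Pi.smul_apply, smul_eq_mul, hqdef]
      push_cast
      rw [div_eq_inv_mul]
    rw [gibbs, htrexp, hexp, ← Matrix.smul_mul, ← Matrix.mul_smul, hfun,
      Matrix.diagonal_smul]
  · have hlog : ∀ j, Real.log (q j) = μ j - Real.log Z := by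
      intro j
      rw [hqdef]
      rw [Real.log_div (Real.exp_pos _).ne' hZ.ne', Real.log_exp]
    have hdiag : Matrix.diagonal (fun j => (Real.log (q j) : ℂ))
        = Matrix.diagonal (fun j => (μ j : ℂ)) - (Real.log Z : ℂ) • 1 := by
      have hf : (fun j => (Real.log (q j) : ℂ))
          = fun j => (μ j : ℂ) - (Real.log Z : ℂ) := by
        funext j
        rw [hlog j]
        push_cast
        ring
      rw [Matrix.smul_one_eq_diagonal, Matrix.diagonal_sub, hf]
    rw [hdiag, Matrix.mul_sub, Matrix.sub_mul, ← hBspec, Matrix.mul_smul, Matrix.smul_mul,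
      Matrix.mul_one, umul1 hWmem]

lemma tendsto_xlog (c d : ℝ) (hc : 0 ≤ c) (hd : 0 < d) :
    Filter.Tendsto (fun ε => c * Real.log ((1-ε) * c + ε/d)) (nhdsWithin 0 (Set.Ioi (0:ℝ)))
      (nhds (c * Real.log c)) := by
  rcases eq_or_lt_of_le hc with h | h
  · have : (fun ε => c * Real.log ((1-ε) * c + ε/d)) = fun _ => c * Real.log c := by
      funext ε; rw [← h]; simp
    rw [this]
    exact tendsto_const_nhds
  · have h1 : Filter.Tendsto (fun ε : ℝ => (1-ε) * c + ε/d) (nhds 0) (nhds c) := by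
      have : Filter.Tendsto (fun ε : ℝ => (1-ε) * c + ε/d) (nhds 0)
          (nhds ((1-0) * c + 0/d)) := by
        apply Filter.Tendsto.add
        · exact (Filter.Tendsto.sub tendsto_const_nhds tendsto_id).mul tendsto_const_nhds
        · exact (tendsto_id.div_const d)
      simpa using this
    have h2 : Filter.Tendsto (fun ε : ℝ => Real.log ((1-ε) * c + ε/d)) (nhds 0)
        (nhds (Real.log c)) := (Real.continuousAt_log h.ne').tendsto.comp h1
    exact ((h2.const_mul c).mono_left nhdsWithin_le_nhds)

lemma subadd {n b : Type*} [Fintype n] [DecidableEq n] [Nonempty n]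
    [Fintype b] [DecidableEq b] [Nonempty b]
    {M : Matrix (n × b) (n × b) ℂ} (hM : M.PosSemidef) (htr : M.trace = 1) :
    vnEntropy M ≤ vnEntropy (ptrace₂ M) + vnEntropy (ptrace₁ M) := by
  have hA : (ptrace₂ M).PosSemidef := ptrace₂_posSemidef hM
  have hB : (ptrace₁ M).PosSemidef := ptrace₁_posSemidef hM
  have htrA : (ptrace₂ M).trace = 1 := by rw [ptrace₂_trace, htr]
  have htrB : (ptrace₁ M).trace = 1 := by rw [ptrace₁_trace, htr]
  set U : Matrix n n ℂ := (hA.1.eigenvectorUnitary : Matrix n n ℂ) with hUdef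
  set p : n → ℝ := hA.1.eigenvalues with hpdef
  set W : Matrix b b ℂ := (hB.1.eigenvectorUnitary : Matrix b b ℂ) with hWdef
  set q : b → ℝ := hB.1.eigenvalues with hqdef
  have hUmem : U ∈ Matrix.unitaryGroup n ℂ := hA.1.eigenvectorUnitary.2
  have hWmem : W ∈ Matrix.unitaryGroup b ℂ := hB.1.eigenvectorUnitary.2
  have hAspec : ptrace₂ M = U * Matrix.diagonal (fun i => (p i : ℂ)) * Uᴴ := spectral' hA.1
  have hBspec : ptrace₁ M = W * Matrix.diagonal (fun j => (q j : ℂ)) * Wᴴ := spectral' hB.1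
  have hp0 : ∀ i, 0 ≤ p i := hA.eigenvalues_nonneg
  have hq0 : ∀ j, 0 ≤ q j := hB.eigenvalues_nonneg
  have hsp : ∑ i, p i = 1 := by
    have h : (ptrace₂ M).trace = ((∑ i, p i : ℝ) : ℂ) := by rw [hAspec, trace_decomp hUmem]
    rw [htrA] at h; exact_mod_cast h.symm
  have hsq : ∑ j, q j = 1 := by
    have h : (ptrace₁ M).trace = ((∑ j, q j : ℝ) : ℂ) := by rw [hBspec, trace_decomp hWmem]
    rw [htrB] at h; exact_mod_cast h.symm
  set dn : ℝ := (Fintype.card n : ℝ) with hdndef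
  set db : ℝ := (Fintype.card b : ℝ) with hdbdef
  have hdn : 0 < dn := by rw [hdndef]; exact_mod_cast Fintype.card_pos
  have hdb : 0 < db := by rw [hdbdef]; exact_mod_cast Fintype.card_pos
  have main : ∀ ε ∈ Set.Ioo (0:ℝ) 1,
      ∑ i, p i * Real.log ((1-ε) * p i + ε/dn)
        + ∑ j, q j * Real.log ((1-ε) * q j + ε/db) ≤ -vnEntropy M := by
    intro ε hε
    set pe : n → ℝ := fun i => (1-ε) * p i + ε/dn with hpedef
    set qe : b → ℝ := fun j => (1-ε) * q j + ε/db with hqedef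
    have hpe : ∀ i, 0 < pe i := fun i =>
      add_pos_of_nonneg_of_pos (mul_nonneg (by linarith [hε.2]) (hp0 i)) (div_pos hε.1 hdn)
    have hqe : ∀ j, 0 < qe j := fun j =>
      add_pos_of_nonneg_of_pos (mul_nonneg (by linarith [hε.2]) (hq0 j)) (div_pos hε.1 hdb)
    have hspe : ∑ i, pe i = 1 := by
      rw [hpedef]
      rw [Finset.sum_add_distrib, ← Finset.mul_sum, hsp, Finset.sum_const, Finset.card_univ,
        nsmul_eq_mul]
      rw [← hdndef]
      field_simp
      ring
    have hsqe : ∑ j, qe j = 1 := by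
      rw [hqedef]
      rw [Finset.sum_add_distrib, ← Finset.mul_sum, hsq, Finset.sum_const, Finset.card_univ,
        nsmul_eq_mul]
      rw [← hdbdef]
      field_simp
      ring
    set r : n × b → ℝ := fun x => pe x.1 * qe x.2 with hrdef
    have hr : ∀ x, 0 < r x := fun x => mul_pos (hpe x.1) (hqe x.2)
    have hsr : ∑ x, r x = 1 := by
      rw [hrdef, Fintype.sum_prod_type]
      simp_rw [← Finset.mul_sum]
      rw [hsqe]
      simpa using hspe
    have hTmem := kron_unitary hUmem hWmem
    have hklein := klein hM htr hTmem r hr hsr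
    have hdiag : (U ⊗ₖ W) * Matrix.diagonal (fun x : n × b => (Real.log (r x) : ℂ))
          * (U ⊗ₖ W)ᴴ
        = (U * Matrix.diagonal (fun i => (Real.log (pe i) : ℂ)) * Uᴴ) ⊗ₖ (1 : Matrix b b ℂ)
          + (1 : Matrix n n ℂ) ⊗ₖ (W * Matrix.diagonal (fun j => (Real.log (qe j) : ℂ)) * Wᴴ)
        := by
      have hsplit : Matrix.diagonal (fun x : n × b => (Real.log (r x) : ℂ))
          = Matrix.diagonal (fun i => (Real.log (pe i) : ℂ)) ⊗ₖ (1 : Matrix b b ℂ)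
            + (1 : Matrix n n ℂ) ⊗ₖ Matrix.diagonal (fun j => (Real.log (qe j) : ℂ)) := by
        rw [show (1 : Matrix b b ℂ) = Matrix.diagonal (fun _ : b => (1:ℂ)) from
          Matrix.diagonal_one.symm,
          show (1 : Matrix n n ℂ) = Matrix.diagonal (fun _ : n => (1:ℂ)) from
          Matrix.diagonal_one.symm,
          Matrix.diagonal_kronecker_diagonal, Matrix.diagonal_kronecker_diagonal,
          Matrix.diagonal_add]
        have hf : (fun x : n × b => (Real.log (r x) : ℂ))
            = fun x : n × b => (Real.log (pe x.1) : ℂ) * 1 + 1 * (Real.log (qe x.2) : ℂ) := by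
          funext x
          rw [hrdef]
          have : Real.log (pe x.1 * qe x.2) = Real.log (pe x.1) + Real.log (qe x.2) :=
            Real.log_mul (hpe x.1).ne' (hqe x.2).ne'
          simp only [this]
          push_cast
          ring
        rw [hf]
      rw [hsplit, Matrix.mul_add, Matrix.add_mul, conjTranspose_kron,
        ← Matrix.mul_kronecker_mul, ← Matrix.mul_kronecker_mul,
        ← Matrix.mul_kronecker_mul, ← Matrix.mul_kronecker_mul]
      simp only [Matrix.mul_one, umul1 hWmem, umul1 hUmem]
    rw [hdiag, Matrix.mul_add, Matrix.trace_add] at hklein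
    have t1 : (M * ((U * Matrix.diagonal (fun i => (Real.log (pe i) : ℂ)) * Uᴴ)
        ⊗ₖ (1 : Matrix b b ℂ))).trace = ((∑ i, p i * Real.log (pe i) : ℝ) : ℂ) := by
      rw [← trace_mul_ptrace₂, hAspec, conj_pair hUmem, trace_conj_diag hUmem]
      push_cast
      rfl
    have t2 : (M * ((1 : Matrix n n ℂ)
        ⊗ₖ (W * Matrix.diagonal (fun j => (Real.log (qe j) : ℂ)) * Wᴴ))).trace
        = ((∑ j, q j * Real.log (qe j) : ℝ) : ℂ) := by
      rw [← trace_mul_ptrace₁, hBspec, conj_pair hWmem, trace_conj_diag hWmem]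
      push_cast
      rfl
    rw [t1, t2, Complex.add_re, Complex.ofReal_re, Complex.ofReal_re] at hklein
    exact hklein
  have lim : Filter.Tendsto (fun ε => ∑ i, p i * Real.log ((1-ε) * p i + ε/dn)
      + ∑ j, q j * Real.log ((1-ε) * q j + ε/db)) (nhdsWithin 0 (Set.Ioi (0:ℝ)))
      (nhds (∑ i, p i * Real.log (p i) + ∑ j, q j * Real.log (q j))) := by
    apply Filter.Tendsto.add
    · exact tendsto_finset_sum _ (fun i _ => tendsto_xlog (p i) dn (hp0 i) hdn)
    · exact tendsto_finset_sum _ (fun j _ => tendsto_xlog (q j) db (hq0 j) hdb)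
  have hev : ∀ᶠ ε in nhdsWithin 0 (Set.Ioi (0:ℝ)),
      ∑ i, p i * Real.log ((1-ε) * p i + ε/dn)
        + ∑ j, q j * Real.log ((1-ε) * q j + ε/db) ≤ -vnEntropy M := by
    filter_upwards [Ioo_mem_nhdsGT (zero_lt_one)] with ε hε
    exact main ε hε
  have hle := le_of_tendsto lim hev
  have hSA : vnEntropy (ptrace₂ M) = -∑ i, p i * Real.log (p i) :=
    vnEntropy_of_decomp hUmem p hA.1 hAspec
  have hSB : vnEntropy (ptrace₁ M) = -∑ j, q j * Real.log (q j) :=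
    vnEntropy_of_decomp hWmem q hB.1 hBspec
  rw [hSA, hSB]
  linarith

end Helpers4


/-- A thermal channel does not increase the free energy. -/
theorem thermal_channel_freeEnergy_nonincreasing
    {n a : Type*} [Fintype n] [DecidableEq n] [Nonempty n]
    [Fintype a] [DecidableEq a] [Nonempty a]
    (Hm : Matrix n n ℂ) (HA : Matrix a a ℂ)
    (hH : Hm.IsHermitian) (hHA : HA.IsHermitian)
    (β : ℝ) (hβ : 0 < β)
    (V : Matrix (n × a) (n × a) ℂ) (hV : V ∈ Matrix.unitaryGroup (n × a) ℂ)
    (hcomm : V * (Hm ⊗ₖ (1 : Matrix a a ℂ) + (1 : Matrix n n ℂ) ⊗ₖ HA) =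
      (Hm ⊗ₖ (1 : Matrix a a ℂ) + (1 : Matrix n n ℂ) ⊗ₖ HA) * V)
    (Φ : Matrix n n ℂ → Matrix n n ℂ)
    (hΦ : ∀ ρ, Φ ρ = ptrace₂ (V * (ρ ⊗ₖ gibbs β HA) * Vᴴ)) :
    ∀ ρ, IsDensityMatrix ρ → freeEnergy (Φ ρ) Hm (1 / β) ≤ freeEnergy ρ Hm (1 / β) := by
  intro ρ hρ
  obtain ⟨W, q, Z, hWmem, hq, hsq, hZ, hgdec, hlogdec⟩ := gibbs_decomp β HA hHA
  have hτpsd : (gibbs β HA).PosSemidef := by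
    rw [hgdec]; exact decomp_posSemidef hWmem (fun j => (hq j).le)
  have hτtr : (gibbs β HA).trace = 1 := by
    rw [hgdec, trace_decomp hWmem, hsq]; norm_num
  obtain ⟨hρpsd, hρtr⟩ := hρ
  have hρH : ρ.IsHermitian := hρpsd.1
  set Uρ : Matrix n n ℂ := (hρH.eigenvectorUnitary : Matrix n n ℂ) with hUρdef
  set p : n → ℝ := hρH.eigenvalues with hpdef
  have hUρmem : Uρ ∈ Matrix.unitaryGroup n ℂ := hρH.eigenvectorUnitary.2
  have hρspec : ρ = Uρ * Matrix.diagonal (fun i => (p i : ℂ)) * Uρᴴ := spectral' hρH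
  have hp0 : ∀ i, 0 ≤ p i := hρpsd.eigenvalues_nonneg
  have hsp : ∑ i, p i = 1 := by
    have h : ρ.trace = ((∑ i, p i : ℝ) : ℂ) := by rw [hρspec, trace_decomp hUρmem]
    rw [hρtr] at h; exact_mod_cast h.symm
  set r : n × a → ℝ := fun x => p x.1 * q x.2 with hrdef
  have hr0 : ∀ x, 0 ≤ r x := fun x => mul_nonneg (hp0 x.1) (hq x.2).le
  have hsr : ∑ x, r x = 1 := by
    rw [hrdef, Fintype.sum_prod_type]
    simp_rw [← Finset.mul_sum]
    rw [hsq]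
    simpa using hsp
  have hkron : ρ ⊗ₖ gibbs β HA
      = (Uρ ⊗ₖ W) * Matrix.diagonal (fun x : n × a => (r x : ℂ)) * (Uρ ⊗ₖ W)ᴴ := by
    conv_lhs => rw [hρspec, hgdec]
    rw [conjTranspose_kron, Matrix.mul_kronecker_mul, Matrix.mul_kronecker_mul,
      Matrix.diagonal_kronecker_diagonal]
    congr 2
    funext x
    rw [hrdef]
    push_cast
    rfl
  set T : Matrix (n × a) (n × a) ℂ := V * (Uρ ⊗ₖ W) with hTdef
  have hTmem : T ∈ Matrix.unitaryGroup (n × a) ℂ := mul_mem hV (kron_unitary hUρmem hWmem)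
  set σ : Matrix (n × a) (n × a) ℂ := V * (ρ ⊗ₖ gibbs β HA) * Vᴴ with hσdef
  have hσdec : σ = T * Matrix.diagonal (fun x : n × a => (r x : ℂ)) * Tᴴ := by
    rw [hσdef, hkron, hTdef]
    simp only [Matrix.conjTranspose_mul, Matrix.mul_assoc]
  have hσpsd : σ.PosSemidef := by rw [hσdec]; exact decomp_posSemidef hTmem hr0
  have hσtr : σ.trace = 1 := by rw [hσdec, trace_decomp hTmem, hsr]; norm_num
  have hΦρ : Φ ρ = ptrace₂ σ := hΦ ρ
  set σB : Matrix a a ℂ := ptrace₁ σ with hσBdef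
  have hσBpsd : σB.PosSemidef := ptrace₁_posSemidef hσpsd
  have hσBtr : σB.trace = 1 := by rw [hσBdef, ptrace₁_trace, hσtr]
  -- entropies
  have hSσ : vnEntropy σ = -∑ x : n × a, r x * Real.log (r x) :=
    vnEntropy_of_decomp hTmem r hσpsd.1 hσdec
  have hSρ : vnEntropy ρ = -∑ i, p i * Real.log (p i) :=
    vnEntropy_of_decomp hUρmem p hρH hρspec
  have hSτ : vnEntropy (gibbs β HA) = -∑ j, q j * Real.log (q j) :=
    vnEntropy_of_decomp hWmem q hτpsd.1 hgdec
  have hadd : ∑ x : n × a, r x * Real.log (r x)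
      = ∑ i, p i * Real.log (p i) + ∑ j, q j * Real.log (q j) := by
    rw [hrdef, Fintype.sum_prod_type]
    have hsplit : ∀ i j, (p i * q j) * Real.log (p i * q j)
        = q j * (p i * Real.log (p i)) + p i * (q j * Real.log (q j)) := by
      intro i j
      rcases eq_or_lt_of_le (hp0 i) with h | h
      · simp [← h]
      · rw [Real.log_mul h.ne' (hq j).ne']; ring
    calc ∑ i, ∑ j, (p i * q j) * Real.log (p i * q j)
        = ∑ i, ∑ j, (q j * (p i * Real.log (p i)) + p i * (q j * Real.log (q j))) :=
          Finset.sum_congr rfl fun i _ => Finset.sum_congr rfl fun j _ => hsplit i j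
      _ = ∑ i, ((p i * Real.log (p i)) + p i * (∑ j, q j * Real.log (q j))) := by
          refine Finset.sum_congr rfl fun i _ => ?_
          rw [Finset.sum_add_distrib, ← Finset.sum_mul, hsq, one_mul, ← Finset.mul_sum]
      _ = ∑ i, p i * Real.log (p i) + ∑ j, q j * Real.log (q j) := by
          rw [Finset.sum_add_distrib, ← Finset.sum_mul, hsp, one_mul]
  have hSσ' : vnEntropy σ = vnEntropy ρ + vnEntropy (gibbs β HA) := by
    rw [hSσ, hadd, hSρ, hSτ]; ring
  have hsub : vnEntropy σ ≤ vnEntropy (Φ ρ) + vnEntropy σB := by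
    rw [hΦρ, hσBdef]; exact subadd hσpsd hσtr
  -- trace expansion helper
  have expand_tr : ∀ (X : Matrix a a ℂ), X.trace = 1 →
      (X * ((-β : ℂ) • HA - (Real.log Z : ℂ) • 1)).trace
        = (-β : ℂ) * (X * HA).trace - (Real.log Z : ℂ) := by
    intro X hX
    rw [Matrix.mul_sub, Matrix.trace_sub, Matrix.mul_smul, Matrix.trace_smul,
      Matrix.mul_smul, Matrix.mul_one, Matrix.trace_smul, hX]
    simp [smul_eq_mul]
  have hre : ∀ (t : ℂ), ((-β : ℂ) * t - (Real.log Z : ℂ)).re = -β * t.re - Real.log Z := by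
    intro t
    simp [Complex.sub_re, Complex.mul_re, Complex.ofReal_re, Complex.ofReal_im]
  -- Klein for σB against the Gibbs state
  have hkl := klein hσBpsd hσBtr hWmem q hq hsq
  rw [hlogdec, expand_tr σB hσBtr] at hkl
  rw [hre] at hkl
  -- Gibbs free-energy identity
  have hτid : -β * ((gibbs β HA * HA).trace).re - Real.log Z = -vnEntropy (gibbs β HA) := by
    have h0 : (gibbs β HA * (W * Matrix.diagonal (fun j => (Real.log (q j) : ℂ)) * Wᴴ)).trace
        = ((∑ j, q j * Real.log (q j) : ℝ) : ℂ) := by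
      conv_lhs => rw [hgdec]
      rw [conj_pair hWmem, trace_conj_diag hWmem]
      push_cast
      rfl
    rw [hlogdec, expand_tr _ hτtr] at h0
    have h1 := congrArg Complex.re h0
    rw [hre, Complex.ofReal_re] at h1
    rw [h1, hSτ, neg_neg]
  -- energy conservation
  have hVK : Vᴴ * (Hm ⊗ₖ (1 : Matrix a a ℂ) + (1 : Matrix n n ℂ) ⊗ₖ HA) * V
      = Hm ⊗ₖ (1 : Matrix a a ℂ) + (1 : Matrix n n ℂ) ⊗ₖ HA := by
    rw [Matrix.mul_assoc, ← hcomm, ← Matrix.mul_assoc, umul2 hV, Matrix.one_mul]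
  have hEcons : (Φ ρ * Hm).trace + (σB * HA).trace
      = (ρ * Hm).trace + (gibbs β HA * HA).trace := by
    have hL : (Φ ρ * Hm).trace + (σB * HA).trace
        = (σ * (Hm ⊗ₖ (1 : Matrix a a ℂ) + (1 : Matrix n n ℂ) ⊗ₖ HA)).trace := by
      rw [hΦρ, hσBdef, trace_mul_ptrace₂, trace_mul_ptrace₁, Matrix.mul_add, Matrix.trace_add]
    have hR : (σ * (Hm ⊗ₖ (1 : Matrix a a ℂ) + (1 : Matrix n n ℂ) ⊗ₖ HA)).trace
        = ((ρ ⊗ₖ gibbs β HA) * (Hm ⊗ₖ (1 : Matrix a a ℂ) + (1 : Matrix n n ℂ) ⊗ₖ HA)).trace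
        := by
      rw [hσdef]
      rw [show V * (ρ ⊗ₖ gibbs β HA) * Vᴴ
            * (Hm ⊗ₖ (1 : Matrix a a ℂ) + (1 : Matrix n n ℂ) ⊗ₖ HA)
          = (V * (ρ ⊗ₖ gibbs β HA))
            * (Vᴴ * (Hm ⊗ₖ (1 : Matrix a a ℂ) + (1 : Matrix n n ℂ) ⊗ₖ HA)) from by
        simp only [Matrix.mul_assoc]]
      rw [Matrix.trace_mul_comm]
      rw [show Vᴴ * (Hm ⊗ₖ (1 : Matrix a a ℂ) + (1 : Matrix n n ℂ) ⊗ₖ HA)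
            * (V * (ρ ⊗ₖ gibbs β HA))
          = (Vᴴ * (Hm ⊗ₖ (1 : Matrix a a ℂ) + (1 : Matrix n n ℂ) ⊗ₖ HA) * V)
            * (ρ ⊗ₖ gibbs β HA) from by simp only [Matrix.mul_assoc]]
      rw [hVK, Matrix.trace_mul_comm]
    have hG : ((ρ ⊗ₖ gibbs β HA) * (Hm ⊗ₖ (1 : Matrix a a ℂ) + (1 : Matrix n n ℂ) ⊗ₖ HA)).trace
        = (ρ * Hm).trace + (gibbs β HA * HA).trace := by
      rw [Matrix.mul_add, Matrix.trace_add, ← Matrix.mul_kronecker_mul,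
        ← Matrix.mul_kronecker_mul, Matrix.mul_one, Matrix.mul_one,
        Matrix.trace_kronecker, Matrix.trace_kronecker, hτtr, hρtr, mul_one, one_mul]
    rw [hL, hR, hG]
  have hEre : ((Φ ρ * Hm).trace).re + ((σB * HA).trace).re
      = ((ρ * Hm).trace).re + ((gibbs β HA * HA).trace).re := by
    have h := congrArg Complex.re hEcons
    simpa [Complex.add_re] using h
  -- final arithmetic
  simp only [freeEnergy]
  have hβ' : (0:ℝ) < 1/β := by positivity
  have hS : vnEntropy ρ + vnEntropy (gibbs β HA) ≤ vnEntropy (Φ ρ) + vnEntropy σB := by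
    rw [← hSσ']; exact hsub
  have h1 : (1/β) * (vnEntropy ρ + vnEntropy (gibbs β HA) - vnEntropy σB)
      ≤ (1/β) * vnEntropy (Φ ρ) :=
    mul_le_mul_of_nonneg_left (by linarith) hβ'.le
  have h2 : (1/β) * vnEntropy σB ≤ ((σB * HA).trace).re + (1/β) * Real.log Z := by
    have hk2 : vnEntropy σB ≤ β * ((σB * HA).trace).re + Real.log Z := by linarith
    calc (1/β) * vnEntropy σB ≤ (1/β) * (β * ((σB * HA).trace).re + Real.log Z) :=
          mul_le_mul_of_nonneg_left hk2 hβ'.le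
      _ = ((σB * HA).trace).re + (1/β) * Real.log Z := by field_simp
  have h3 : (1/β) * vnEntropy (gibbs β HA)
      = ((gibbs β HA * HA).trace).re + (1/β) * Real.log Z := by
    have hτ2 : vnEntropy (gibbs β HA) = β * ((gibbs β HA * HA).trace).re + Real.log Z := by
      linarith
    rw [hτ2]
    field_simp
  linarith

end
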